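/- Let V be a ℤ-module with a symmetric ℤ-valued bilinear form B (write (x.y) for B(x,y)), let h ∈ V satisfy (h.h) = 3, assume that for every x ∈ V with (h.x) = 0 the integer (x.x) is even, and let M be a ℤ-submodule of V with h ∈ M on which B is positive definite. If r ∈ M satisfies (r.r) = 2, then (h.r) ∈ {−2, 0, 2}. -/

import Mathlib

private lemma bil_zsmul_left {V : Type*} [AddCommGroup V] [Module ℤ V]
    (B : V →ₗ[ℤ] V →ₗ[ℤ] ℤ) (n : ℤ) (x y : V) : B (n • x) y = n * B x y := by
  induction n using Int.induction_on with
  | zero => simp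
  | succ k ih => rw [add_zsmul, one_zsmul, map_add, LinearMap.add_apply, ih]; ring
  | pred k ih =>
    simp only [sub_zsmul, one_zsmul, map_add, map_neg, LinearMap.add_apply,
      LinearMap.neg_apply, ih] <;> ring

private lemma bil_zsmul_right {V : Type*} [AddCommGroup V] [Module ℤ V]
    (B : V →ₗ[ℤ] V →ₗ[ℤ] ℤ) (n : ℤ) (x y : V) : B x (n • y) = n * B x y := by
  induction n using Int.induction_on with
  | zero => simp
  | succ k ih => rw [add_zsmul, one_zsmul, map_add, ih]; ring
  | pred k ih => simp only [sub_zsmul, one_zsmul, map_add, map_neg, ih]; ring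

private lemma zsmul_mem' {V : Type*} [AddCommGroup V] [Module ℤ V]
    (M : Submodule ℤ V) (n : ℤ) {x : V} (hx : x ∈ M) : n • x ∈ M := by
  induction n using Int.induction_on with
  | zero => simpa using M.zero_mem

  | succ k ih => rw [add_zsmul, one_zsmul]; exact M.add_mem ih hx
  | pred k ih =>
    rw [sub_zsmul, one_zsmul]
    exact M.add_mem ih (M.neg_mem hx)

/-- Key step in the proof of Lemma 2.5: if `(r.r) = 2` for some `r` in the positive
definite sublattice `M ∋ h` with `(h.h) = 3` and even orthogonal complement of `h`,
then `(h.r) ∈ {-2, 0, 2}`. -/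
theorem stmt_1 (V : Type*) [AddCommGroup V] [Module ℤ V]
    (B : V →ₗ[ℤ] V →ₗ[ℤ] ℤ) (hsymm : ∀ x y : V, B x y = B y x)
    (h : V) (hh : B h h = 3)
    (heven : ∀ x : V, B h x = 0 → Even (B x x))
    (M : Submodule ℤ V) (hM : h ∈ M)
    (hpos : ∀ x ∈ M, x ≠ 0 → 0 < B x x)
    (r : V) (hr : r ∈ M) (hrr : B r r = 2) :
    B h r = -2 ∨ B h r = 0 ∨ B h r = 2 := by
  set a : ℤ := B h r with ha
  have hrh : B r h = a := by rw [hsymm]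
  -- x = a•h - 3•r is orthogonal to h
  have hx : B h (a • h - (3:ℤ) • r) = 0 := by
    simp only [map_sub, bil_zsmul_right, hh, ← ha]
    ring
  have hxx := heven _ hx
  have hxxval : B (a • h - (3:ℤ) • r) (a • h - (3:ℤ) • r) = 18 - 3 * a ^ 2 := by
    simp only [map_sub, LinearMap.sub_apply, bil_zsmul_left, bil_zsmul_right,
      hh, hrr, hrh, ← ha]
    ring
  rw [hxxval] at hxx
  -- hence a is even
  obtain ⟨k, hk⟩ : Even a := by
    rcases Int.even_or_odd a with he | ⟨t, ht⟩
    · exact he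
    · exfalso
      obtain ⟨m, hm⟩ := hxx
      rw [ht] at hm
      have hexp : (2 * t + 1) ^ 2 = 4 * (t * t) + (4 * t + 1) := by ring
      rw [hexp] at hm
      set u := t * t
      omega
  -- v = 2•h - a•r ∈ M
  set v : V := (2:ℤ) • h - a • r with hv
  have hvM : v ∈ M := M.sub_mem (zsmul_mem' M 2 hM) (zsmul_mem' M a hr)
  have hvv : B v v = 12 - 2 * a ^ 2 := by
    simp only [hv, map_sub, LinearMap.sub_apply, bil_zsmul_left, bil_zsmul_right,
      hh, hrr, hrh, ← ha]
    ring
  by_cases hv0 : v = 0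
  · exfalso
    have hz : B h v = 0 := by rw [hv0]; simp
    have h6 : 6 - a * a = 0 := by
      rw [hv] at hz
      simp only [map_sub, bil_zsmul_right, hh, ← ha] at hz
      linarith
    rw [hk] at h6
    have h4 : 4 * (k * k) = 6 := by nlinarith
    set u := k * k
    omega
  · have hp := hpos v hvM hv0
    rw [hvv, hk] at hp
    have hk2 : k * k ≤ 1 := by nlinarith
    have h1 : -1 ≤ k := by nlinarith [sq_nonneg (k + 1)]
    have h2 : k ≤ 1 := by nlinarith [sq_nonneg (k - 1)]
    rw [hk]
    interval_cases k <;> simp
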